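/- Let V and W be Banach lattices, let S : V →L W and T : W →L V be positive bounded linear operators, and define the bounded operator M on the product Banach lattice V × W (ordered componentwise) by M(v, w) := (T w, S v). Then I − M is bijective with a positive bounded inverse if and only if I − T∘S is bijective (on V) with a positive bounded inverse, and this holds if and only if I − S∘T is bijective (on W) with a positive bounded inverse. -/

import Mathlib

open ContinuousLinearMap

private lemma aux_swap {V W : Type*}
    [NormedAddCommGroup V] [Lattice V] [HasSolidNorm V]
    [IsOrderedAddMonoid V] [NormedSpace ℝ V] [CompleteSpace V]
    [NormedAddCommGroup W] [Lattice W] [HasSolidNorm W]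
    [IsOrderedAddMonoid W] [NormedSpace ℝ W] [CompleteSpace W]
    (S : V →L[ℝ] W) (T : W →L[ℝ] V)
    (hS : ∀ v : V, 0 ≤ v → 0 ≤ S v) (hT : ∀ w : W, 0 ≤ w → 0 ≤ T w)
    (N : V →L[ℝ] V) (hN : ∀ x : V, 0 ≤ x → 0 ≤ N x)
    (h1 : (1 - T.comp S) * N = 1) (h2 : N * (1 - T.comp S) = 1) :
    ∃ N' : W →L[ℝ] W, (∀ y : W, 0 ≤ y → 0 ≤ N' y) ∧
      (1 - S.comp T) * N' = 1 ∧ N' * (1 - S.comp T) = 1 := by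
  refine ⟨1 + S.comp (N.comp T), ?_, ?_, ?_⟩
  · intro y hy
    have h0 : (0:W) ≤ S (N (T y)) := hS _ (hN _ (hT _ hy))
    simpa using add_nonneg hy h0
  · refine ContinuousLinearMap.ext fun y => ?_
    have h := congrArg (fun f => f (T y)) h1
    simp only [mul_apply_eq_comp, _root_.sub_apply, one_apply_eq_self, coe_comp', Function.comp_apply] at h
    have h' := congrArg S h
    simp only [map_sub] at h'
    simp only [mul_apply_eq_comp, _root_.sub_apply, one_apply_eq_self, coe_comp', Function.comp_apply, _root_.add_apply]
    rw [map_add T, map_add S]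
    rw [show y + S (N (T y)) - (S (T y) + S (T (S (N (T y)))))
        = (S (N (T y)) - S (T (S (N (T y))))) + (y - S (T y)) from by abel, h']
    abel
  · refine ContinuousLinearMap.ext fun y => ?_
    have h := congrArg (fun f => f (T y)) h2
    simp only [mul_apply_eq_comp, _root_.sub_apply, one_apply_eq_self, coe_comp', Function.comp_apply] at h
    simp only [mul_apply_eq_comp, _root_.sub_apply, one_apply_eq_self, coe_comp', Function.comp_apply, _root_.add_apply,
      map_sub]
    have h3 : S (N (T y)) - S (N (T (S (T y)))) = S (T y) := by
      rw [← map_sub S, ← map_sub N, h]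
    rw [show y + S (N (T y)) - (S (T y) + S (N (T (S (T y)))))
        = (S (N (T y)) - S (N (T (S (T y))))) + (y - S (T y)) from by abel, h3]
    abel

theorem stmt_3 {V W : Type*}
    [NormedAddCommGroup V] [Lattice V] [HasSolidNorm V]
    [IsOrderedAddMonoid V] [NormedSpace ℝ V] [CompleteSpace V]
    [NormedAddCommGroup W] [Lattice W] [HasSolidNorm W]
    [IsOrderedAddMonoid W] [NormedSpace ℝ W] [CompleteSpace W]
    (S : V →L[ℝ] W) (T : W →L[ℝ] V)
    (hS : ∀ v : V, 0 ≤ v → 0 ≤ S v) (hT : ∀ w : W, 0 ≤ w → 0 ≤ T w)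
    (M : V × W →L[ℝ] V × W) (hM : ∀ (v : V) (w : W), M (v, w) = (T w, S v)) :
    ((∃ N : V × W →L[ℝ] V × W, (∀ q : V × W, 0 ≤ q → 0 ≤ N q) ∧
        (1 - M) * N = 1 ∧ N * (1 - M) = 1) ↔
      (∃ N : V →L[ℝ] V, (∀ x : V, 0 ≤ x → 0 ≤ N x) ∧
        (1 - T.comp S) * N = 1 ∧ N * (1 - T.comp S) = 1)) ∧
    ((∃ N : V →L[ℝ] V, (∀ x : V, 0 ≤ x → 0 ≤ N x) ∧
        (1 - T.comp S) * N = 1 ∧ N * (1 - T.comp S) = 1) ↔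
      (∃ N : W →L[ℝ] W, (∀ y : W, 0 ≤ y → 0 ≤ N y) ∧
        (1 - S.comp T) * N = 1 ∧ N * (1 - S.comp T) = 1)) := by
  have hMapp : ∀ q : V × W, M q = (T q.2, S q.1) := fun q => by
    simpa using hM q.1 q.2
  constructor
  · constructor
    · rintro ⟨P, hP, hP1, hP2⟩
      refine ⟨(ContinuousLinearMap.fst ℝ V W).comp (P.comp (ContinuousLinearMap.inl ℝ V W)),
        ?_, ?_, ?_⟩
      · intro v hv
        have hq : (0 : V × W) ≤ (v, 0) := by
          rw [Prod.le_def]; exact ⟨hv, le_refl 0⟩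
        exact (hP _ hq).1
      · refine ContinuousLinearMap.ext fun v => ?_
        have h := congrArg (fun f => f ((v, 0) : V × W)) hP1
        simp only [mul_apply_eq_comp, one_apply_eq_self, _root_.sub_apply] at h
        rw [hMapp (P ((v,0):V×W))] at h
        have h1 : (P ((v,0):V×W)).1 - T (P ((v,0):V×W)).2 = v := congrArg Prod.fst h
        have h2 : (P ((v,0):V×W)).2 - S (P ((v,0):V×W)).1 = 0 := congrArg Prod.snd h
        have h2' : (P ((v,0):V×W)).2 = S (P ((v,0):V×W)).1 := by
          rwa [sub_eq_zero] at h2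
        simp only [mul_apply_eq_comp, _root_.sub_apply, one_apply_eq_self, coe_comp', Function.comp_apply,
          coe_fst', inl_apply]
        rw [← h2']
        exact h1
      · refine ContinuousLinearMap.ext fun v => ?_
        have h := congrArg (fun f => f ((v, S v) : V × W)) hP2
        simp only [mul_apply_eq_comp, one_apply_eq_self, _root_.sub_apply] at h
        rw [hMapp ((v, S v) : V × W)] at h
        simp only [mul_apply_eq_comp, _root_.sub_apply, one_apply_eq_self, coe_comp', Function.comp_apply,
          coe_fst', inl_apply]
        have hq : ((v, S v) : V × W) - ((T (S v), S v) : V × W)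
            = ((v - T (S v), 0) : V × W) := by
          simp [Prod.ext_iff]
        rw [hq] at h
        exact congrArg Prod.fst h
    · rintro ⟨N, hN, h1, h2⟩
      set A : V × W →L[ℝ] V := N.comp ((ContinuousLinearMap.fst ℝ V W) +
        T.comp (ContinuousLinearMap.snd ℝ V W)) with hA
      have hAapp : ∀ (v : V) (w : W), A (v, w) = N (v + T w) := fun v w => by
        simp [hA]
      refine ⟨A.prod ((ContinuousLinearMap.snd ℝ V W) + S.comp A), ?_, ?_, ?_⟩
      · rintro ⟨v, w⟩ hq
        rw [Prod.le_def] at hq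
        have hx : (0:V) ≤ N (v + T w) := hN _ (add_nonneg hq.1 (hT _ hq.2))
        constructor
        · simpa [hAapp] using hx
        · have : (0:W) ≤ w + S (N (v + T w)) := add_nonneg hq.2 (hS _ hx)
          simpa [hAapp] using this
      · refine ContinuousLinearMap.ext fun q => ?_
        obtain ⟨v, w⟩ := q
        have h := congrArg (fun f => f (v + T w)) h1
        simp only [mul_apply_eq_comp, _root_.sub_apply, one_apply_eq_self, coe_comp', Function.comp_apply] at h
        -- h : N (v + T w) - T (S (N (v + T w))) = v + T w
        have e1 : ((1 - M) * (A.prod ((ContinuousLinearMap.snd ℝ V W) + S.comp A))) (v, w)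
            = (N (v + T w) - T (w + S (N (v + T w))),
               w + S (N (v + T w)) - S (N (v + T w))) := by
          simp only [mul_apply_eq_comp, _root_.sub_apply, one_apply_eq_self, prod_apply, coe_comp',
            Function.comp_apply, _root_.add_apply, coe_snd']
          rw [hMapp]
          simp only [hAapp]
          rfl
        rw [e1]
        have e2 : N (v + T w) - T (w + S (N (v + T w))) = v := by
          rw [map_add T]
          rw [show N (v + T w) - (T w + T (S (N (v + T w))))
              = (N (v + T w) - T (S (N (v + T w)))) - T w from by abel, h]
          abel
        rw [Prod.ext_iff]
        refine ⟨by simpa only [one_apply_eq_self] using e2, ?_⟩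
        simp only [one_apply_eq_self]
        abel
      · refine ContinuousLinearMap.ext fun q => ?_
        obtain ⟨v, w⟩ := q
        have h := congrArg (fun f => f v) h2
        simp only [mul_apply_eq_comp, _root_.sub_apply, one_apply_eq_self, coe_comp', Function.comp_apply] at h
        -- h : N (v - T (S v)) = v
        have e1 : ((A.prod ((ContinuousLinearMap.snd ℝ V W) + S.comp A)) * (1 - M)) (v, w)
            = (N (v - T w + T (w - S v)), w - S v + S (N (v - T w + T (w - S v)))) := by
          simp only [mul_apply_eq_comp, _root_.sub_apply, one_apply_eq_self, prod_apply, coe_comp',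
            Function.comp_apply, _root_.add_apply, coe_snd']
          rw [hMapp]
          simp only [hAapp]
          rfl
        rw [e1]
        have e3 : v - T w + T (w - S v) = v - T (S v) := by rw [map_sub T]; abel
        rw [e3, h, Prod.ext_iff]
        simp only [one_apply_eq_self]
        exact ⟨by trivial, by abel⟩
  · constructor
    · rintro ⟨N, hN, h1, h2⟩
      exact aux_swap S T hS hT N hN h1 h2
    · rintro ⟨N, hN, h1, h2⟩
      exact aux_swap T S hT hS N hN h1 h2
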